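/- Given a short exact sequence 0 → P → N → M → 0 of R-modules, if M and P are S-coherent, then N is S-coherent. -/

import Mathlib

def IsSFinite {R : Type*} [CommRing R] (S : Submonoid R) (M : Type*) [AddCommGroup M]
    [Module R M] : Prop :=
  ∃ s ∈ S, ∃ N : Submodule R M, N.FG ∧ ∀ m : M, s • m ∈ N

def IsSFinitelyPresented {R : Type*} [CommRing R] (S : Submonoid R) (M : Type*)
    [AddCommGroup M] [Module R M] : Prop :=
  ∃ (n : ℕ) (f : (Fin n → R) →ₗ[R] M), Function.Surjective f ∧ IsSFinite S (LinearMap.ker f)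

/-- An `R`-module is `S`-coherent if it is finitely generated and every finitely generated
submodule is `S`-finitely presented. -/
def IsSCoherentModule {R : Type*} [CommRing R] (S : Submonoid R) (M : Type*)
    [AddCommGroup M] [Module R M] : Prop :=
  Module.Finite R M ∧ ∀ N : Submodule R M, N.FG → IsSFinitelyPresented S ↥N

open Submodule LinearMap Set

section Aux

variable {R : Type*} [CommRing R] (S : Submonoid R)

/-- Transfer `IsSFinite` of a submodule to a statement about submodules of the ambient module. -/
theorem isSFinite_iff_sub {V : Type*} [AddCommGroup V] [Module R V] (K : Submodule R V) :
    IsSFinite S ↥K ↔ ∃ s ∈ S, ∃ B : Submodule R V, B.FG ∧ B ≤ K ∧ ∀ x ∈ K, s • x ∈ B := by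
  constructor
  · rintro ⟨s, hs, B', hB'fg, hB'⟩
    refine ⟨s, hs, B'.map K.subtype, hB'fg.map _, map_subtype_le _ _, fun x hx => ?_⟩
    exact ⟨s • ⟨x, hx⟩, hB' ⟨x, hx⟩, rfl⟩
  · rintro ⟨s, hs, B, hBfg, hBK, hB⟩
    refine ⟨s, hs, B.comap K.subtype, ?_, fun m => ?_⟩
    · apply Submodule.fg_of_fg_map_injective K.subtype K.injective_subtype
      rwa [Submodule.map_comap_subtype, inf_eq_right.mpr hBK]
    · simpa [Submodule.mem_comap] using hB m m.2

/-- Any finite free presentation of an `S`-finitely presented module has `S`-finite kernel. -/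
theorem sfp_ker {M : Type*} [AddCommGroup M] [Module R M] (hM : IsSFinitelyPresented S M)
    {n : ℕ} (π : (Fin n → R) →ₗ[R] M) (hπ : Function.Surjective π) :
    ∃ s ∈ S, ∃ B : Submodule R (Fin n → R), B.FG ∧ B ≤ LinearMap.ker π ∧
      ∀ x ∈ LinearMap.ker π, s • x ∈ B := by
  obtain ⟨m, β, hβ, hkβ⟩ := hM
  obtain ⟨s, hs, B, hBfg, hBk, hB⟩ := (isSFinite_iff_sub S _).mp hkβ
  set e := Pi.basisFun R (Fin n) with he
  set e' := Pi.basisFun R (Fin m) with he'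
  choose hv hvs using fun i => hβ (π (e i))
  choose lv lvs using fun j => hπ (β (e' j))
  set h : (Fin n → R) →ₗ[R] (Fin m → R) := e.constr ℕ hv with hh
  set l : (Fin m → R) →ₗ[R] (Fin n → R) := e'.constr ℕ lv with hl
  have hβh : ∀ x, β (h x) = π x := by
    have : β ∘ₗ h = π := e.ext fun i => by simp [hh, Module.Basis.constr_basis, hvs]
    exact fun x => LinearMap.congr_fun this x
  have hπl : ∀ x, π (l x) = β x := by
    have : π ∘ₗ l = β := e'.ext fun j => by simp [hl, Module.Basis.constr_basis, lvs]
    exact fun x => LinearMap.congr_fun this x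
  set u : (Fin n → R) →ₗ[R] (Fin n → R) := LinearMap.id - l ∘ₗ h with hu
  have hu_apply : ∀ x, u x = x - l (h x) := fun x => rfl
  refine ⟨s, hs, B.map l ⊔ LinearMap.range u,
    (hBfg.map l).sup ?_, ?_, ?_⟩
  · rw [← Submodule.map_top]
    exact (Module.finite_def.mp inferInstance).map _
  · apply sup_le
    · rintro _ ⟨x, hx, rfl⟩
      have : β x = 0 := hBk hx
      simp [LinearMap.mem_ker, hπl, this]
    · rintro _ ⟨x, rfl⟩
      rw [LinearMap.mem_ker, hu_apply, map_sub, hπl, hβh, sub_self]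
  · intro x hx
    have hhx : h x ∈ LinearMap.ker β := by
      simp [LinearMap.mem_ker, hβh, LinearMap.mem_ker.mp hx]
    have h1 : l (s • h x) ∈ B.map l := Submodule.mem_map_of_mem (hB _ hhx)
    have h2 : u (s • x) ∈ LinearMap.range u := LinearMap.mem_range_self _ _
    have key : s • x = l (s • h x) + u (s • x) := by
      rw [hu_apply]
      simp only [map_smul]
      abel
    rw [key]
    exact Submodule.add_mem_sup h1 h2

/-- Every finitely generated submodule is the range of a map from a finite free module. -/
theorem fg_exists_fin_map {V : Type*} [AddCommGroup V] [Module R V] {W : Submodule R V}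
    (h : W.FG) : ∃ (n : ℕ) (φ : (Fin n → R) →ₗ[R] V), LinearMap.range φ = W := by
  obtain ⟨n, x, hx⟩ := Submodule.fg_iff_exists_fin_generating_family.mp h
  exact ⟨n, Fintype.linearCombination R x, by rw [Fintype.range_linearCombination, hx]⟩

end Aux

theorem scoherent_middle_of_ses {R : Type*} [CommRing R] (S : Submonoid R)
    {P N M : Type*} [AddCommGroup P] [Module R P] [AddCommGroup N] [Module R N]
    [AddCommGroup M] [Module R M]
    (f : P →ₗ[R] N) (g : N →ₗ[R] M)
    (hf : Function.Injective f) (hg : Function.Surjective g) (hfg : Function.Exact f g)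
    (hM : IsSCoherentModule S M) (hP : IsSCoherentModule S P) : IsSCoherentModule S N := by
  have hkerg : LinearMap.ker g = LinearMap.range f := hfg.linearMap_ker_eq
  constructor
  · -- N is finite
    apply Module.finite_def.mpr
    apply Submodule.fg_of_fg_map_of_fg_inf_ker g
    · rw [Submodule.map_top, LinearMap.range_eq_top.mpr hg]
      exact Module.finite_def.mp hM.1
    · rw [top_inf_eq, hkerg, ← Submodule.map_top]
      exact (Module.finite_def.mp hP.1).map f
  · intro L hL
    obtain ⟨n, φ, hφ⟩ := fg_exists_fin_map hL
    set ψ : (Fin n → R) →ₗ[R] M := g ∘ₗ φ with hψ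
    have hψker : ∀ x, ψ x = 0 ↔ φ x ∈ LinearMap.range f := by
      intro x
      rw [← hkerg]
      exact Iff.rfl
    -- Step 1: the image L.map g is S-finitely presented; get S-finiteness of ker ψ
    have hM₀fg : (L.map g).FG := hL.map g
    have hψmem : ∀ x, ψ x ∈ L.map g := fun x =>
      Submodule.mem_map_of_mem (hφ ▸ LinearMap.mem_range_self φ x)
    set π₀ : (Fin n → R) →ₗ[R] ↥(L.map g) := ψ.codRestrict (L.map g) hψmem with hπ₀
    have hπ₀surj : Function.Surjective π₀ := by
      rintro ⟨y, hy⟩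
      obtain ⟨x, hx, rfl⟩ := hy
      rw [← hφ] at hx
      obtain ⟨z, rfl⟩ := hx
      exact ⟨z, rfl⟩
    obtain ⟨s₁, hs₁, K₁, hK₁fg, hK₁le, hK₁⟩ := sfp_ker S (hM.2 _ hM₀fg) π₀ hπ₀surj
    have hkπ₀ : LinearMap.ker π₀ = LinearMap.ker ψ := LinearMap.ker_codRestrict _ _ _
    rw [hkπ₀] at hK₁le hK₁
    -- Step 2: pull back φ(K₁) along f
    have hK₁f : ∀ x ∈ K₁, φ x ∈ LinearMap.range f := fun x hx =>
      (hψker x).mp (hK₁le hx)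
    set Q₁ : Submodule R P := (K₁.map φ).comap f with hQ₁
    have hmapK₁ : K₁.map φ ≤ LinearMap.range f := by
      rintro _ ⟨x, hx, rfl⟩
      exact hK₁f x hx
    have hQ₁fg : Q₁.FG := by
      apply Submodule.fg_of_fg_map_injective f hf
      rw [hQ₁, Submodule.map_comap_eq, inf_eq_right.mpr hmapK₁]
      exact hK₁fg.map φ
    -- Step 3: present K₁ and map it to Q₁
    obtain ⟨m, ρ, hρ⟩ := fg_exists_fin_map hK₁fg
    have hρK₁ : ∀ y, ρ y ∈ K₁ := fun y => hρ ▸ LinearMap.mem_range_self ρ y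
    set eP := LinearEquiv.ofInjective f hf with heP
    set v : (Fin m → R) →ₗ[R] P :=
      eP.symm.toLinearMap ∘ₗ ((φ ∘ₗ ρ).codRestrict (LinearMap.range f)
        (fun y => hK₁f _ (hρK₁ y))) with hv
    have hfv : ∀ y, f (v y) = φ (ρ y) := by
      intro y
      have := eP.apply_symm_apply ⟨φ (ρ y), hK₁f _ (hρK₁ y)⟩
      have h2 := congrArg Subtype.val this
      simpa [hv, heP, LinearEquiv.ofInjective_apply] using h2
    have hvQ₁ : ∀ y, v y ∈ Q₁ := fun y => by
      rw [hQ₁, Submodule.mem_comap, hfv]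
      exact Submodule.mem_map_of_mem (hρK₁ y)
    set θ : (Fin m → R) →ₗ[R] ↥Q₁ := v.codRestrict Q₁ hvQ₁ with hθ
    have hθsurj : Function.Surjective θ := by
      rintro ⟨q, hq⟩
      rw [hQ₁, Submodule.mem_comap] at hq
      obtain ⟨x, hx, hxeq⟩ := hq
      obtain ⟨y, rfl⟩ : x ∈ LinearMap.range ρ := hρ ▸ hx
      refine ⟨y, Subtype.ext (hf ?_)⟩
      show f (v y) = f q
      rw [hfv, hxeq]
    obtain ⟨s₂, hs₂, C, hCfg, hCle, hC⟩ := sfp_ker S (hP.2 _ hQ₁fg) θ hθsurj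
    have hkθ : ∀ y, y ∈ LinearMap.ker θ ↔ φ (ρ y) = 0 := by
      intro y
      rw [LinearMap.mem_ker, hθ]
      constructor
      · intro h
        have : v y = 0 := congrArg Subtype.val h
        rw [← hfv, this, map_zero]
      · intro h
        apply Subtype.ext
        show v y = 0
        apply hf
        rw [hfv, h, map_zero]
    -- Step 4: assemble the presentation of L
    have hφL : ∀ x, φ x ∈ L := fun x => hφ ▸ LinearMap.mem_range_self φ x
    set πL : (Fin n → R) →ₗ[R] ↥L := φ.codRestrict L hφL with hπL
    have hπLsurj : Function.Surjective πL := by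
      rintro ⟨y, hy⟩
      rw [← hφ] at hy
      obtain ⟨x, rfl⟩ := hy
      exact ⟨x, rfl⟩
    refine ⟨n, πL, hπLsurj, ?_⟩
    have hkπL : LinearMap.ker πL = LinearMap.ker φ := LinearMap.ker_codRestrict _ _ _
    rw [isSFinite_iff_sub, hkπL]
    refine ⟨s₂ * s₁, S.mul_mem hs₂ hs₁, C.map ρ, hCfg.map ρ, ?_, ?_⟩
    · rintro _ ⟨y, hy, rfl⟩
      exact LinearMap.mem_ker.mpr ((hkθ y).mp (hCle hy))
    · intro x hx
      have hxψ : x ∈ LinearMap.ker ψ := by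
        rw [LinearMap.mem_ker, hψ, LinearMap.comp_apply, LinearMap.mem_ker.mp hx, map_zero]
      have hs₁x : s₁ • x ∈ K₁ := hK₁ x hxψ
      obtain ⟨y, hyeq⟩ : s₁ • x ∈ LinearMap.range ρ := hρ ▸ hs₁x
      have hyker : y ∈ LinearMap.ker θ := by
        rw [hkθ, hyeq, map_smul, LinearMap.mem_ker.mp hx, smul_zero]
      have : ρ (s₂ • y) ∈ C.map ρ := Submodule.mem_map_of_mem (hC y hyker)
      rwa [map_smul, hyeq, smul_smul] at this
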